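/- Every reversible ring is right Central McCoy. -/

import Mathlib

/-- A ring `R` is *right Central McCoy* if whenever nonzero polynomials
`f, g ∈ R[x]` satisfy `f * g = 0`, there is a nonzero `r ∈ R` with
every coefficient of `f` times `r` central in `R`. -/
def IsRightCentralMcCoy (R : Type*) [Ring R] : Prop :=
  ∀ f g : Polynomial R, f ≠ 0 → g ≠ 0 → f * g = 0 →
    ∃ r : R, r ≠ 0 ∧ ∀ i : ℕ, f.coeff i * r ∈ Set.center R

theorem reversible_isRightCentralMcCoy (R : Type*) [Ring R]
    (hrev : ∀ a b : R, a * b = 0 → b * a = 0) :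
    IsRightCentralMcCoy R := by
  intro f g hf hg hfg
  classical
  -- predicate: there is a nonzero right annihilator of f of natDegree n
  set p : ℕ → Prop := fun n => ∃ h : Polynomial R, h ≠ 0 ∧ f * h = 0 ∧ h.natDegree = n
    with hp_def
  have hp : ∃ n, p n := ⟨g.natDegree, g, hg, hfg, rfl⟩
  obtain ⟨h, hh0, hfh, hhdeg⟩ := Nat.find_spec hp
  have hmin : ∀ n < Nat.find hp, ¬ p n := fun n hn => Nat.find_min hp hn
  set m := h.natDegree with hm
  -- main induction: h * C (f.coeff k) = 0 for all k
  have key : ∀ d k : ℕ, f.natDegree < k + d → h * Polynomial.C (f.coeff k) = 0 := by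
    intro d
    induction d with
    | zero =>
        intro k hk
        rw [Polynomial.coeff_eq_zero_of_natDegree_lt (by omega), map_zero, mul_zero]
    | succ d ih =>
        intro k hk
        -- from ih: for i > k, f.coeff i * h.coeff j = 0
        have hgt : ∀ i > k, ∀ j, f.coeff i * h.coeff j = 0 := by
          intro i hi j
          have := ih i (by omega)
          have hc : h.coeff j * f.coeff i = 0 := by
            have := congrArg (fun q => Polynomial.coeff q j) this
            simpa [Polynomial.coeff_mul_C] using this
          exact hrev _ _ hc
        -- coefficient of x^(k+m) of f*h gives f.coeff k * h.coeff m = 0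
        have hkm : f.coeff k * h.coeff m = 0 := by
          have hsum : (0 : R) =
              ∑ x ∈ Finset.HasAntidiagonal.antidiagonal (k + m), f.coeff x.1 * h.coeff x.2 := by
            have := congrArg (fun q => Polynomial.coeff q (k + m)) hfh
            simpa [Polynomial.coeff_mul] using this.symm
          have hothers : ∀ x ∈ Finset.HasAntidiagonal.antidiagonal (k + m), x ≠ (k, m) →
              f.coeff x.1 * h.coeff x.2 = 0 := by
            intro x hx hxne
            rw [Finset.HasAntidiagonal.mem_antidiagonal] at hx
            rcases lt_trichotomy x.1 k with hlt | heq | hgt'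
            · have : m < x.2 := by omega
              rw [Polynomial.coeff_eq_zero_of_natDegree_lt this, mul_zero]
            · exfalso; apply hxne
              have : x.2 = m := by omega
              exact Prod.ext heq this
            · exact hgt x.1 hgt' x.2
          have := Finset.sum_eq_single_of_mem (k, m)
            (Finset.HasAntidiagonal.mem_antidiagonal.mpr rfl) hothers
          rw [this] at hsum
          exact hsum.symm
        -- h' := h * C (f.coeff k) must be 0 by minimality
        by_contra hne
        set h' := h * Polynomial.C (f.coeff k) with hh'
        have hfh' : f * h' = 0 := by rw [hh', ← mul_assoc, hfh, zero_mul]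
        have hdle : h'.natDegree ≤ m := by
          have := Polynomial.natDegree_mul_le (p := h) (q := Polynomial.C (f.coeff k))
          simpa [Polynomial.natDegree_C] using this
        have hcm : h'.coeff m = 0 := by
          rw [hh', Polynomial.coeff_mul_C]
          exact hrev _ _ hkm
        have hdlt : h'.natDegree < m := by
          rcases lt_or_eq_of_le hdle with hlt | heq
          · exact hlt
          · exfalso
            apply hne
            have : h'.leadingCoeff = 0 := by
              rw [Polynomial.leadingCoeff, heq, hcm]
            exact Polynomial.leadingCoeff_eq_zero.mp this
        have : p h'.natDegree := ⟨h', hne, hfh', rfl⟩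
        exact hmin h'.natDegree (hhdeg ▸ hdlt) this
  -- conclude
  refine ⟨h.leadingCoeff, fun hc => hh0 (Polynomial.leadingCoeff_eq_zero.mp hc), ?_⟩
  intro i
  have h1 : h * Polynomial.C (f.coeff i) = 0 := key (f.natDegree + 1) i (by omega)
  have h2 : h.coeff m * f.coeff i = 0 := by
    have := congrArg (fun q => Polynomial.coeff q m) h1
    simpa [Polynomial.coeff_mul_C] using this
  have h3 : f.coeff i * h.leadingCoeff = 0 := hrev _ _ h2
  rw [h3]
  exact Set.zero_mem_center
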